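/- Let d ≥ 2 and let π be a probability measure on ℝ^d with an everywhere strictly positive density ρ with respect to Lebesgue measure, such that the score s := ∇ log ρ exists Lebesgue-almost everywhere and satisfies ∫ ‖s(x)‖² dπ(x) < ∞. Then for every ε_score > 0 and every ε_TV > 0 there exist a unit vector u ∈ ℝ^d, an angle θ ∈ (0, π/2), and a closed ball K' of positive radius contained in the interior of Cone_{θ,u}, such that the score estimate ŝ : ℝ^d → ℝ^d defined by ŝ(x) = u for x ∈ K' and ŝ(x) = s(x) for x ∉ K' satisfies: (1) ∫ ‖ŝ(x) − s(x)‖² dπ(x) ≤ ε_score², and (2) 0 < π(Cone_{θ,u}) ≤ ε_TV and π(Cone_{θ,u}) < 1. -/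

import Mathlib

open MeasureTheory
open scoped Classical

/-- For `θ ∈ (0, π/2)` and a unit vector `u ∈ ℝ^d`,
`Cone_{θ,u} := {y ≠ 0 : ⟨y, u⟩ ≥ ‖y‖ cos θ}`. -/
def cone {d : ℕ} (θ : ℝ) (u : EuclideanSpace ℝ (Fin d)) : Set (EuclideanSpace ℝ (Fin d)) :=
  {y | y ≠ 0 ∧ ‖y‖ * Real.cos θ ≤ (inner ℝ y u : ℝ)}

lemma aemeasurable_of_ae_continuousAt {α : Type*} [MeasurableSpace α] [TopologicalSpace α]
    [OpensMeasurableSpace α] {μ : Measure α} {f : α → ℝ}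
    (h : ∀ᵐ x ∂μ, ContinuousAt f x) : AEMeasurable f μ := by
  set D := {x | ContinuousAt f x} with hDdef
  have hD : MeasurableSet D := measurableSet_of_continuousAt f
  have hcont : ContinuousOn f D := fun x hx => hx.continuousWithinAt
  obtain ⟨g, hgm, hfg⟩ := hcont.aemeasurable hD
  refine ⟨g, hgm, ?_⟩
  have h1 : ∀ᵐ x ∂μ, x ∈ D → f x = g x := (ae_restrict_iff' hD).mp hfg
  filter_upwards [h, h1] with x hx h1x using h1x hx


set_option maxHeartbeats 1000000 in
/-- for any target with everywhere positive density and square-integrable score,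
one can corrupt the score on a small closed ball inside a thin cone so that the `L²` score error
is at most `ε_score`, while the cone has small but positive target mass. -/
theorem stmt8 (d : ℕ) (hd : 2 ≤ d)
    (ρ : EuclideanSpace ℝ (Fin d) → ℝ) (hρ : ∀ x, 0 < ρ x)
    (μ : Measure (EuclideanSpace ℝ (Fin d)))
    (hμ : μ = volume.withDensity fun x => ENNReal.ofReal (ρ x))
    (hprob : IsProbabilityMeasure μ)
    (s : EuclideanSpace ℝ (Fin d) → EuclideanSpace ℝ (Fin d))
    (hs : ∀ᵐ x ∂(volume : Measure (EuclideanSpace ℝ (Fin d))),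
      HasGradientAt (fun y => Real.log (ρ y)) (s x) x)
    (hs2 : Integrable (fun x => ‖s x‖ ^ 2) μ)
    (εscore εTV : ℝ) (hεscore : 0 < εscore) (hεTV : 0 < εTV) :
    ∃ u : EuclideanSpace ℝ (Fin d), ‖u‖ = 1 ∧
    ∃ θ ∈ Set.Ioo (0 : ℝ) (Real.pi / 2),
    ∃ (c : EuclideanSpace ℝ (Fin d)) (r : ℝ), 0 < r ∧
      Metric.closedBall c r ⊆ interior (cone θ u) ∧
      (∫ x, ‖(if x ∈ Metric.closedBall c r then u else s x) - s x‖ ^ 2 ∂μ) ≤ εscore ^ 2 ∧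
      0 < μ (cone θ u) ∧ μ (cone θ u) ≤ ENNReal.ofReal εTV ∧ μ (cone θ u) < 1 := by
    classical
  have hd0 : 0 < d := lt_of_lt_of_le two_pos hd
  -- the unit vector
  set u : EuclideanSpace ℝ (Fin d) := EuclideanSpace.single (⟨0, hd0⟩ : Fin d) (1:ℝ) with hu_def
  have hu : ‖u‖ = 1 := by rw [hu_def, EuclideanSpace.norm_single]; exact norm_one
  have hu0 : u ≠ 0 := by intro h; rw [h] at hu; simp at hu
  haveI : Nontrivial (EuclideanSpace ℝ (Fin d)) := ⟨u, 0, hu0⟩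
  refine ⟨u, hu, ?_⟩
  -- absolute continuity
  have hac : μ ≪ (volume : Measure (EuclideanSpace ℝ (Fin d))) := by
    rw [hμ]; exact withDensity_absolutelyContinuous _ _
  -- measurability of s
  have hsc : AEMeasurable s (volume : Measure (EuclideanSpace ℝ (Fin d))) := by
    refine ⟨fun x => (InnerProductSpace.toDual ℝ (EuclideanSpace ℝ (Fin d))).symm
        (fderiv ℝ (fun y => Real.log (ρ y)) x),
      (InnerProductSpace.toDual ℝ (EuclideanSpace ℝ (Fin d))).symm.continuous.measurable.comp
        (measurable_fderiv ℝ _), ?_⟩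
    filter_upwards [hs] with x hx
    have h1 : HasFDerivAt (fun y => Real.log (ρ y))
        (InnerProductSpace.toDual ℝ (EuclideanSpace ℝ (Fin d)) (s x)) x := hx.hasFDerivAt
    simp [h1.fderiv]
  have hsμ : AEMeasurable s μ := hsc.mono_ac hac
  -- measurability of ρ
  have hρm : AEMeasurable ρ (volume : Measure (EuclideanSpace ℝ (Fin d))) := by
    have hlm : AEMeasurable (fun x => Real.log (ρ x))
        (volume : Measure (EuclideanSpace ℝ (Fin d))) := by
      refine aemeasurable_of_ae_continuousAt ?_
      filter_upwards [hs] with x hx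
      exact hx.hasFDerivAt.continuousAt
    refine (Real.measurable_exp.comp_aemeasurable hlm).congr ?_
    exact Filter.Eventually.of_forall fun x => Real.exp_log (hρ x)
  -- positive measure of nonempty open sets
  have hpos : ∀ V : Set (EuclideanSpace ℝ (Fin d)), IsOpen V → V.Nonempty → 0 < μ V := by
    intro V hVo hVne
    rw [hμ, withDensity_apply _ hVo.measurableSet, pos_iff_ne_zero]
    intro h0
    have hmeas : AEMeasurable (fun x => ENNReal.ofReal (ρ x)) (volume.restrict V) :=
      (ENNReal.measurable_ofReal.comp_aemeasurable hρm).restrict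
    have hae := (lintegral_eq_zero_iff' hmeas).mp h0
    have h1 : ∀ᵐ x ∂(volume.restrict V), False := by
      filter_upwards [hae] with x hx
      have hx' : ENNReal.ofReal (ρ x) = 0 := hx
      rw [ENNReal.ofReal_eq_zero] at hx'
      exact absurd hx' (not_le.mpr (hρ x))
    have h2 : volume.restrict V Set.univ = 0 := by simpa [ae_iff] using h1
    rw [Measure.restrict_apply_univ] at h2
    exact absurd h2 (hVo.measure_pos volume hVne).ne'
  -- singleton has measure zero
  have hμu : μ {u} = 0 := hac (measure_singleton u)
  -- the angles
  set θn : ℕ → ℝ := fun n => min (Real.pi/4) (1/(n+1)) with hθn_def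
  have hθn_pos : ∀ n, 0 < θn n := fun n =>
    lt_min (by positivity) (by positivity)
  have hθn_lt : ∀ n, θn n < Real.pi / 2 := fun n =>
    lt_of_le_of_lt (min_le_left _ _) (by linarith [Real.pi_pos])
  have hθn_anti : Antitone θn := by
    intro m n hmn
    refine min_le_min le_rfl ?_
    apply one_div_le_one_div_of_le (by positivity)
    have : (m:ℝ) ≤ n := Nat.cast_le.mpr hmn
    linarith
  have hθn_tendsto : Filter.Tendsto θn Filter.atTop (nhds 0) :=
    squeeze_zero (fun n => (hθn_pos n).le) (fun n => min_le_right _ _)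
      tendsto_one_div_add_atTop_nhds_zero_nat
  have hcos_tendsto : Filter.Tendsto (fun n => Real.cos (θn n)) Filter.atTop (nhds 1) := by
    have := (Real.continuous_cos.tendsto 0).comp hθn_tendsto
    simpa [Function.comp_def] using this
  -- cones are antitone and measurable
  have hcone_mono : ∀ {θ θ' : ℝ}, 0 ≤ θ' → θ' ≤ θ → θ ≤ Real.pi → cone θ' u ⊆ cone θ u := by
    intro θ θ' h0 h1 h2 y hy
    refine ⟨hy.1, le_trans ?_ hy.2⟩
    have := Real.cos_le_cos_of_nonneg_of_le_pi h0 h2 h1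
    nlinarith [norm_nonneg y]
  have hinner_cont : Continuous (fun y : EuclideanSpace ℝ (Fin d) => (inner ℝ y u : ℝ)) :=
    continuous_id.inner continuous_const
  have hcone_meas : ∀ θ : ℝ, MeasurableSet (cone θ u) := by
    intro θ
    have : cone θ u = {y : EuclideanSpace ℝ (Fin d) | ‖y‖ * Real.cos θ ≤ (inner ℝ y u : ℝ)} ∩
        {(0:EuclideanSpace ℝ (Fin d))}ᶜ := by
      ext y; simp [cone, and_comm]
    rw [this]
    exact ((isClosed_le (continuous_norm.mul continuous_const) hinner_cont).measurableSet).inter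
      (measurableSet_singleton 0).compl
  -- intersection of the cones is contained in the span of u
  have hInter : (⋂ n, cone (θn n) u) ⊆ (Submodule.span ℝ {u} : Submodule ℝ _) := by
    intro y hy
    simp only [Set.mem_iInter] at hy
    have h1 : ‖y‖ ≤ (inner ℝ y u : ℝ) := by
      have h2 : Filter.Tendsto (fun n => ‖y‖ * Real.cos (θn n)) Filter.atTop (nhds ‖y‖) := by
        have := hcos_tendsto.const_mul ‖y‖
        simpa using this
      exact le_of_tendsto h2 (Filter.Eventually.of_forall fun n => (hy n).2)
    have h2 : (inner ℝ y u : ℝ) = ‖y‖ * ‖u‖ := by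
      have := real_inner_le_norm y u
      rw [hu] at this ⊢
      linarith
    have h3 : ‖u‖ • y = ‖y‖ • u := inner_eq_norm_mul_iff_real.mp h2
    rw [hu, one_smul] at h3
    rw [h3]
    exact Submodule.smul_mem _ _ (Submodule.mem_span_singleton_self u)
  -- span has measure zero
  have hspan : μ ((Submodule.span ℝ {u} : Submodule ℝ _) : Set (EuclideanSpace ℝ (Fin d))) = 0 := by
    apply hac
    apply Measure.addHaar_submodule
    intro h
    have h1 : Module.finrank ℝ (Submodule.span ℝ {u}) = 1 := finrank_span_singleton hu0
    rw [h, finrank_top, finrank_euclideanSpace_fin] at h1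
    omega
  have hμInter : μ (⋂ n, cone (θn n) u) = 0 :=
    le_antisymm (le_trans (measure_mono hInter) hspan.le) zero_le
  -- continuity from above
  have htend : Filter.Tendsto (fun n => μ (cone (θn n) u)) Filter.atTop (nhds 0) := by
    have := tendsto_measure_iInter_atTop (μ := μ)
      (fun n => (hcone_meas (θn n)).nullMeasurableSet)
      (fun m n hmn => hcone_mono (hθn_pos n).le (hθn_anti hmn)
        (le_trans (hθn_lt m).le (by linarith [Real.pi_pos])))
      ⟨0, (measure_lt_top μ _).ne⟩
    rw [hμInter] at this
    exact this
  -- choose the angle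
  have hev : ∀ᶠ n in Filter.atTop,
      μ (cone (θn n) u) < min 1 (ENNReal.ofReal εTV) :=
    htend.eventually_lt_const (lt_min one_pos (by simpa using hεTV))
  obtain ⟨n₀, hn₀⟩ := hev.exists
  set θ := θn n₀ with hθ_def
  refine ⟨θ, ⟨hθn_pos n₀, hθn_lt n₀⟩, ?_⟩
  -- the open set inside the cone
  set V : Set (EuclideanSpace ℝ (Fin d)) :=
    {y | ‖y‖ * Real.cos θ < (inner ℝ y u : ℝ) ∧ 0 < (inner ℝ y u : ℝ)} with hV_def
  have hVo : IsOpen V :=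
    (isOpen_lt (continuous_norm.mul continuous_const) hinner_cont).inter
      (isOpen_lt continuous_const hinner_cont)
  have huV : u ∈ V := by
    have h1 : (inner ℝ u u : ℝ) = 1 := by
      rw [real_inner_self_eq_norm_sq, hu]; norm_num
    constructor
    · rw [hu]
      have : Real.cos θ < Real.cos 0 :=
        Real.cos_lt_cos_of_nonneg_of_le_pi le_rfl
          (by linarith [Real.pi_pos, hθn_lt n₀]) (hθn_pos n₀)
      rw [Real.cos_zero] at this
      rw [h1]; linarith
    · rw [h1]; norm_num
  have hVcone : V ⊆ cone θ u := by
    intro y hy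
    refine ⟨?_, hy.1.le⟩
    intro h
    rw [hV_def] at hy
    rw [h] at hy
    simp only [Set.mem_setOf_eq, inner_zero_left] at hy
    exact lt_irrefl 0 hy.2
  have hVint : V ⊆ interior (cone θ u) := interior_maximal hVcone hVo
  -- small ball inside V
  obtain ⟨r₀, hr₀, hball⟩ := Metric.isOpen_iff.mp hVo u huV
  have hcball : Metric.closedBall u (r₀/2) ⊆ V :=
    le_trans (Metric.closedBall_subset_ball (by linarith)) hball
  -- integrability of the error function
  set f : EuclideanSpace ℝ (Fin d) → ℝ := fun x => ‖u - s x‖^2 with hf_def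
  have hfm : AEStronglyMeasurable f μ := by
    have h1 : AEMeasurable (fun x => u - s x) μ := aemeasurable_const.sub hsμ
    exact (continuous_norm.pow 2).comp_aestronglyMeasurable h1.aestronglyMeasurable
  have hfnn : ∀ x, 0 ≤ f x := fun x => sq_nonneg _
  have hfint : Integrable f μ := by
    refine Integrable.mono' ((integrable_const (2:ℝ)).add (hs2.const_mul 2)) hfm ?_
    refine Filter.Eventually.of_forall fun x => ?_
    rw [Real.norm_of_nonneg (hfnn x)]
    simp only [Pi.add_apply, hf_def]
    have h1 : ‖u - s x‖ ≤ 1 + ‖s x‖ := by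
      calc ‖u - s x‖ ≤ ‖u‖ + ‖s x‖ := norm_sub_le _ _
      _ = 1 + ‖s x‖ := by rw [hu]
    nlinarith [sq_nonneg (1 - ‖s x‖), norm_nonneg (u - s x), norm_nonneg (s x),
      pow_le_pow_left₀ (norm_nonneg (u - s x)) h1 2]
  -- dominated convergence for shrinking balls
  set F : ℕ → EuclideanSpace ℝ (Fin d) → ℝ :=
    fun n => (Metric.closedBall u (1/(n+1))).indicator f with hF_def
  have hFtend : Filter.Tendsto (fun n => ∫ x, F n x ∂μ) Filter.atTop
      (nhds (∫ x, ({u} : Set (EuclideanSpace ℝ (Fin d))).indicator f x ∂μ)) := by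
    refine tendsto_integral_of_dominated_convergence f
      (fun n => hfm.indicator measurableSet_closedBall) hfint
      (fun n => Filter.Eventually.of_forall fun x => ?_) ?_
    · rw [Real.norm_of_nonneg (Set.indicator_nonneg (fun y _ => hfnn y) x)]
      exact Set.indicator_le_self' (fun y _ => hfnn y) x
    · refine Filter.Eventually.of_forall fun x => ?_
      by_cases hx : x = u
      · have h1 : ∀ n : ℕ, F n x = f x := fun n =>
          Set.indicator_of_mem (by
            rw [hx]; exact Metric.mem_closedBall_self (by positivity)) f
        have h2 : ({u} : Set (EuclideanSpace ℝ (Fin d))).indicator f x = f x :=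
          Set.indicator_of_mem (by rw [hx]; exact rfl) f
        rw [h2]
        simp only [h1]
        exact tendsto_const_nhds
      · have h2 : ({u} : Set (EuclideanSpace ℝ (Fin d))).indicator f x = 0 :=
          Set.indicator_of_notMem (by simpa using hx) f
        rw [h2]
        have hd1 : 0 < dist x u := dist_pos.mpr hx
        have h3 : ∀ᶠ n in Filter.atTop, F n x = 0 := by
          have h4 := tendsto_one_div_add_atTop_nhds_zero_nat.eventually_lt_const hd1
          filter_upwards [h4] with n hn
          refine Set.indicator_of_notMem ?_ f
          rw [Metric.mem_closedBall]
          push_neg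
          exact hn
        exact Filter.Tendsto.congr' (h3.mono fun n hn => hn.symm) tendsto_const_nhds
  have hzero : (∫ x, ({u} : Set (EuclideanSpace ℝ (Fin d))).indicator f x ∂μ) = 0 := by
    have hae : ({u} : Set (EuclideanSpace ℝ (Fin d))).indicator f =ᵐ[μ] 0 := by
      have h1 : ∀ᵐ x ∂μ, x ∉ ({u} : Set (EuclideanSpace ℝ (Fin d))) := by
        rw [ae_iff]
        simpa using hμu
      filter_upwards [h1] with x hx
      simp [Set.indicator_of_notMem hx]
    rw [integral_congr_ae hae]
    simp
  rw [hzero] at hFtend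
  -- choose the radius
  have hev1 : ∀ᶠ n in Filter.atTop, (∫ x, F n x ∂μ) < εscore^2 :=
    hFtend.eventually_lt_const (by positivity)
  have hev2 : ∀ᶠ n : ℕ in Filter.atTop, 1/((n:ℝ)+1) ≤ r₀/2 := by
    have := tendsto_one_div_add_atTop_nhds_zero_nat.eventually_lt_const
      (by positivity : (0:ℝ) < r₀/2)
    filter_upwards [this] with n hn using hn.le
  obtain ⟨n, hn1, hn2⟩ := (hev1.and hev2).exists
  refine ⟨u, 1/((n:ℝ)+1), by positivity, ?_, ?_, ?_, ?_, ?_⟩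
  · exact le_trans (le_trans (Metric.closedBall_subset_closedBall hn2) hcball) hVint
  · have heq : (fun x => ‖(if x ∈ Metric.closedBall u (1/((n:ℝ)+1)) then u else s x) - s x‖^2)
        = F n := by
      funext x
      by_cases hx : x ∈ Metric.closedBall u (1/((n:ℝ)+1))
      · simp only [hF_def, hx, if_true, Set.indicator_of_mem hx, hf_def]
      · simp only [hF_def, hx, if_false, Set.indicator_of_notMem hx, sub_self, norm_zero]
        norm_num
    rw [heq]
    exact hn1.le
  · exact lt_of_lt_of_le (hpos V hVo ⟨u, huV⟩) (measure_mono hVcone)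
  · exact le_of_lt (lt_of_lt_of_le hn₀ (min_le_right _ _))
  · exact lt_of_lt_of_le hn₀ (min_le_left _ _)
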